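/- (Lemma 3.3, volume case k = d.) There is a constant c > 0 such that for every closed set B ⊆ ℝ^d and every ε ∈ (0,R), λ_d(F_ε ∩ B) ≤ c · #Ω(B,ε) · ε^d, where Ω(B,ε) := {ω ∈ Σ(ε) : (S_ω F)_ε ∩ B ≠ ∅} and #Ω(B,ε) is its cardinality. -/

import Mathlib

open MeasureTheory Filter Metric Set
open scoped ENNReal

/-- For a word `ω = ω₁…ωₙ`, the product `r_ω = r_{ω₁} ⋯ r_{ωₙ}` of contraction
ratios (`r_∅ = 1`). -/
def wordRatio {N : ℕ} (r : Fin N → ℝ) (ω : List (Fin N)) : ℝ := (ω.map r).prod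

/-- For a word `ω = ω₁…ωₙ`, the composed map `S_ω = S_{ω₁} ∘ ⋯ ∘ S_{ωₙ}`
(`S_∅ = id`). -/
def wordMap {N : ℕ} {E : Type*} (S : Fin N → E → E) (ω : List (Fin N)) : E → E :=
  ω.foldr (fun i g => S i ∘ g) id

/-- The family `Σ(ε)` of all words `ω = ω₁…ωₙ`, `n ≥ 1`, with
`R r_ω < ε ≤ R r_{ω₁…ω_{n-1}}`. -/
def sigmaWords {N : ℕ} (r : Fin N → ℝ) (R ε : ℝ) : Set (List (Fin N)) :=
  {ω | ω ≠ [] ∧ R * wordRatio r ω < ε ∧ ε ≤ R * wordRatio r ω.dropLast}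

section Aux

variable {N : ℕ} {E : Type*}

lemma wordRatio_nil (r : Fin N → ℝ) : wordRatio r [] = 1 := rfl

lemma wordRatio_cons (r : Fin N → ℝ) (i : Fin N) (t : List (Fin N)) :
    wordRatio r (i :: t) = r i * wordRatio r t := by simp [wordRatio]

lemma wordRatio_append (r : Fin N → ℝ) (a b : List (Fin N)) :
    wordRatio r (a ++ b) = wordRatio r a * wordRatio r b := by simp [wordRatio]

lemma wordRatio_pos {r : Fin N → ℝ} (hr : ∀ i, r i ∈ Set.Ioo (0 : ℝ) 1)
    (ω : List (Fin N)) : 0 < wordRatio r ω := by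
  induction ω with
  | nil => simp [wordRatio_nil]
  | cons i t ih => rw [wordRatio_cons]; exact mul_pos (hr i).1 ih

lemma wordRatio_le_pow {r : Fin N → ℝ} (hr : ∀ i, r i ∈ Set.Ioo (0 : ℝ) 1)
    {j : Fin N} (hj : ∀ i, r i ≤ r j) (ω : List (Fin N)) :
    wordRatio r ω ≤ r j ^ ω.length := by
  induction ω with
  | nil => simp [wordRatio_nil]
  | cons i t ih =>
    rw [wordRatio_cons, List.length_cons, pow_succ']
    exact mul_le_mul (hj i) ih (wordRatio_pos hr t).le (hr j).1.le

lemma wordMap_cons (S : Fin N → E → E) (i : Fin N) (t : List (Fin N)) :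
    wordMap S (i :: t) = S i ∘ wordMap S t := rfl

lemma wordMap_append (S : Fin N → E → E) (a b : List (Fin N)) :
    wordMap S (a ++ b) = wordMap S a ∘ wordMap S b := by
  induction a with
  | nil => rfl
  | cons i t ih => rw [List.cons_append, wordMap_cons, ih, wordMap_cons]; rfl

lemma wordMap_dist [PseudoMetricSpace E] {S : Fin N → E → E} {r : Fin N → ℝ}
    (hS : ∀ i x y, dist (S i x) (S i y) = r i * dist x y)
    (ω : List (Fin N)) (x y : E) :
    dist (wordMap S ω x) (wordMap S ω y) = wordRatio r ω * dist x y := by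
  induction ω with
  | nil => simp [wordMap, wordRatio_nil]
  | cons i t ih =>
    rw [wordMap_cons, wordRatio_cons]
    simp only [Function.comp_apply]
    rw [hS, ih, mul_assoc]

lemma wordMap_continuous [PseudoMetricSpace E] {S : Fin N → E → E} {r : Fin N → ℝ}
    (hr : ∀ i, r i ∈ Set.Ioo (0 : ℝ) 1)
    (hS : ∀ i x y, dist (S i x) (S i y) = r i * dist x y)
    (ω : List (Fin N)) : Continuous (wordMap S ω) := by
  induction ω with
  | nil => exact continuous_id
  | cons i t ih =>
    rw [wordMap_cons]
    have : LipschitzWith (r i).toNNReal (S i) := by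
      apply LipschitzWith.of_dist_le_mul
      intro x y
      rw [hS i x y, Real.coe_toNNReal _ (hr i).1.le]
    exact this.continuous.comp ih

/-- The covering induction: starting from a word `σ` with `ε ≤ R r_{σ.dropLast}`,
any point of `S_σ F` lies in some `S_ω F` with `ω ∈ Σ(ε)`. -/
lemma cover_aux {S : Fin N → E → E} {r : Fin N → ℝ}
    (hr : ∀ i, r i ∈ Set.Ioo (0 : ℝ) 1) {j : Fin N} (hj : ∀ i, r i ≤ r j)
    {F : Set E} (hFinv : F = ⋃ i, S i '' F) {R ε : ℝ} (hR : 0 < R) :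
    ∀ n : ℕ, ∀ σ : List (Fin N), σ ≠ [] → ε ≤ R * wordRatio r σ.dropLast →
      R * wordRatio r σ * r j ^ n < ε →
      ∀ x ∈ wordMap S σ '' F, ∃ ω ∈ sigmaWords r R ε, x ∈ wordMap S ω '' F := by
  intro n
  induction n with
  | zero =>
    intro σ hσ hdrop hlt x hx
    rw [pow_zero, mul_one] at hlt
    exact ⟨σ, ⟨hσ, hlt, hdrop⟩, hx⟩
  | succ n ih =>
    intro σ hσ hdrop hlt x hx
    by_cases hcase : R * wordRatio r σ < ε
    · exact ⟨σ, ⟨hσ, hcase, hdrop⟩, hx⟩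
    · push_neg at hcase
      obtain ⟨z, hzF, rfl⟩ := hx
      rw [hFinv, Set.mem_iUnion] at hzF
      obtain ⟨i, w, hwF, hw⟩ := hzF
      refine ih (σ ++ [i]) (by simp) ?_ ?_ (wordMap S σ z) ?_
      · rw [List.dropLast_concat]; exact hcase
      · rw [wordRatio_append, wordRatio_cons, wordRatio_nil, mul_one]
        have h1 : R * (wordRatio r σ * r i) * r j ^ n
            ≤ R * wordRatio r σ * r j ^ (n + 1) := by
          rw [pow_succ']
          have := mul_le_mul_of_nonneg_left (hj i)
            (mul_nonneg hR.le (wordRatio_pos hr σ).le)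
          nlinarith [pow_nonneg (hr j).1.le n, this]
        exact lt_of_le_of_lt h1 hlt
      · refine ⟨w, hwF, ?_⟩
        rw [wordMap_append]
        simp only [Function.comp_apply]
        have : wordMap S [i] w = S i w := rfl
        rw [this, hw]

lemma cover {S : Fin N → E → E} {r : Fin N → ℝ}
    (hr : ∀ i, r i ∈ Set.Ioo (0 : ℝ) 1) {j : Fin N} (hj : ∀ i, r i ≤ r j)
    {F : Set E} (hFinv : F = ⋃ i, S i '' F) {R ε : ℝ} (hR : 0 < R)
    (hε : ε ∈ Set.Ioo (0 : ℝ) R) :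
    ∀ x ∈ F, ∃ ω ∈ sigmaWords r R ε, x ∈ wordMap S ω '' F := by
  intro x hx
  rw [hFinv, Set.mem_iUnion] at hx
  obtain ⟨i, w, hwF, hw⟩ := hx
  obtain ⟨n, hn⟩ := exists_pow_lt_of_lt_one (div_pos hε.1 hR) (hr j).2
  refine cover_aux hr hj hFinv hR n [i] (by simp) ?_ ?_ x ⟨w, hwF, by rw [← hw]; rfl⟩
  · simp only [List.dropLast_singleton, wordRatio_nil, mul_one]
    exact hε.2.le
  · rw [wordRatio_cons, wordRatio_nil, mul_one]
    have h1 : R * r i * r j ^ n ≤ R * r j ^ n := by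
      have hp := pow_nonneg (hr j).1.le n
      have : R * r i ≤ R := by nlinarith [(hr i).1, (hr i).2]
      exact mul_le_mul_of_nonneg_right this hp
    have h2 : R * r j ^ n < ε := by
      have := (lt_div_iff₀ hR).1 hn
      linarith
    exact lt_of_le_of_lt h1 h2

lemma sigmaWords_finite {r : Fin N → ℝ}
    (hr : ∀ i, r i ∈ Set.Ioo (0 : ℝ) 1) {j : Fin N} (hj : ∀ i, r i ≤ r j)
    {R ε : ℝ} (hR : 0 < R) (hε : 0 < ε) : (sigmaWords r R ε).Finite := by
  obtain ⟨n, hn⟩ := exists_pow_lt_of_lt_one (div_pos hε hR) (hr j).2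
  refine (List.finite_length_le (Fin N) (n + 1)).subset ?_
  intro ω hω
  obtain ⟨hne, _, hdrop⟩ := hω
  simp only [Set.mem_setOf_eq]
  by_contra h
  push_neg at h
  have hlen : n ≤ ω.dropLast.length := by
    rw [List.length_dropLast]; omega
  have h1 : wordRatio r ω.dropLast ≤ r j ^ ω.dropLast.length :=
    wordRatio_le_pow hr hj _
  have h2 : r j ^ ω.dropLast.length ≤ r j ^ n :=
    pow_le_pow_of_le_one (hr j).1.le (hr j).2.le hlen
  have h3 : r j ^ n < ε / R := hn
  have : ε < R * (ε / R) := by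
    calc ε ≤ R * wordRatio r ω.dropLast := hdrop
    _ ≤ R * (r j ^ n) := by nlinarith
    _ < R * (ε / R) := (mul_lt_mul_iff_right₀ hR).2 h3
  rw [mul_div_cancel₀ _ hR.ne'] at this
  exact lt_irrefl ε this
end Aux

/-- Lemma 3.3 of Winter–Zähle, volume case `k = d`: for any closed `B`, the
volume of `F_ε` inside `B` is bounded by `c ε^d` times the number of
words `ω ∈ Σ(ε)` whose cylinder neighborhood `(S_ω F)_ε` meets `B`. -/
theorem volume_localized_estimate
    (d N : ℕ) (hd : 1 ≤ d) (hN : 2 ≤ N)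
    (S : Fin N → EuclideanSpace ℝ (Fin d) → EuclideanSpace ℝ (Fin d))
    (r : Fin N → ℝ) (hr : ∀ i, r i ∈ Set.Ioo (0 : ℝ) 1)
    (hS : ∀ i x y, dist (S i x) (S i y) = r i * dist x y)
    (F : Set (EuclideanSpace ℝ (Fin d))) (hFne : F.Nonempty) (hFc : IsCompact F)
    (hFinv : F = ⋃ i, S i '' F)
    (hOSC : ∃ O : Set (EuclideanSpace ℝ (Fin d)), O.Nonempty ∧ IsOpen O ∧
      Bornology.IsBounded O ∧ (⋃ i, S i '' O) ⊆ O ∧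
      ∀ i j, i ≠ j → Disjoint (S i '' O) (S j '' O))
    (D : ℝ) (hD : 0 < D) (hDd : D ≤ d) (hDsum : ∑ i, r i ^ D = 1)
    (R : ℝ) (hR : Real.sqrt 2 * Metric.diam F < R) :
    ∃ c > (0 : ℝ), ∀ B : Set (EuclideanSpace ℝ (Fin d)), IsClosed B →
      ∀ ε ∈ Set.Ioo (0 : ℝ) R,
        volume (Metric.cthickening ε F ∩ B) ≤
          ENNReal.ofReal (c *
            ({ω ∈ sigmaWords r R ε |
                (Metric.cthickening ε (wordMap S ω '' F) ∩ B).Nonempty}.ncard : ℝ) *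
            ε ^ (d : ℝ)) := by
  -- a maximal contraction ratio
  obtain ⟨j, -, hj'⟩ := Finset.exists_max_image Finset.univ r
    ⟨⟨0, by omega⟩, Finset.mem_univ _⟩
  have hj : ∀ i, r i ≤ r j := fun i => hj' i (Finset.mem_univ i)
  -- basic bounds on R and diam F
  have hsqrt : (1 : ℝ) ≤ Real.sqrt 2 := by
    rw [show (1:ℝ) = Real.sqrt 1 by simp]
    exact Real.sqrt_le_sqrt (by norm_num)
  have hdiamF : Metric.diam F < R := by
    nlinarith [Metric.diam_nonneg (s := F)]
  have hR0 : 0 < R := lt_of_le_of_lt Metric.diam_nonneg hdiamF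
  -- the constant
  set V : ℝ≥0∞ := volume (ball (0 : EuclideanSpace ℝ (Fin d)) 1) with hV
  have hVpos : 0 < V := measure_ball_pos volume 0 one_pos
  have hVlt : V < ⊤ := measure_ball_lt_top
  refine ⟨2 ^ d * V.toReal, mul_pos (pow_pos two_pos d)
    (ENNReal.toReal_pos hVpos.ne' hVlt.ne), ?_⟩
  intro B hB ε hε
  set Ω : Set (List (Fin N)) := {ω ∈ sigmaWords r R ε |
    (Metric.cthickening ε (wordMap S ω '' F) ∩ B).Nonempty} with hΩ
  have hΩfin : Ω.Finite :=
    (sigmaWords_finite hr hj hR0 hε.1).subset (Set.sep_subset _ _)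
  -- the cover inclusion
  have hsub : Metric.cthickening ε F ∩ B ⊆
      ⋃ ω ∈ hΩfin.toFinset, Metric.cthickening ε (wordMap S ω '' F) := by
    rintro x ⟨hx1, hxB⟩
    have h1 : EMetric.infEdist x F ≤ ENNReal.ofReal ε := Metric.mem_cthickening_iff.1 hx1
    have h2 : Metric.infDist x F ≤ ε := by
      rw [Metric.infDist]
      calc (EMetric.infEdist x F).toReal ≤ (ENNReal.ofReal ε).toReal :=
            ENNReal.toReal_mono ENNReal.ofReal_ne_top h1
        _ = ε := ENNReal.toReal_ofReal hε.1.le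
    obtain ⟨y, hyF, hxy⟩ := hFc.exists_infDist_eq_dist hFne x
    obtain ⟨ω, hwSig, hyω⟩ := cover hr hj hFinv hR0 hε y hyF
    have hxω : x ∈ Metric.cthickening ε (wordMap S ω '' F) :=
      Metric.mem_cthickening_of_dist_le x y ε _ hyω (by rw [← hxy]; exact h2)
    have hωΩ : ω ∈ Ω := ⟨hwSig, ⟨x, hxω, hxB⟩⟩
    exact Set.mem_biUnion (hΩfin.mem_toFinset.2 hωΩ) hxω
  -- the volume of each piece
  obtain ⟨z₀, hz₀⟩ := id hFne
  have hvol : ∀ ω ∈ hΩfin.toFinset,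
      volume (Metric.cthickening ε (wordMap S ω '' F)) ≤
        ENNReal.ofReal ((2 * ε) ^ d) * V := by
    intro ω hω
    have hwSig : ω ∈ sigmaWords r R ε := (hΩfin.mem_toFinset.1 hω).1
    have hKc : IsCompact (wordMap S ω '' F) := hFc.image (wordMap_continuous hr hS ω)
    have hKne : (wordMap S ω '' F).Nonempty := hFne.image _
    have hrω : 0 < wordRatio r ω := wordRatio_pos hr ω
    have hdiamK : Metric.diam (wordMap S ω '' F) ≤ wordRatio r ω * Metric.diam F := by
      apply Metric.diam_le_of_forall_dist_le (mul_nonneg hrω.le Metric.diam_nonneg)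
      rintro a ⟨p, hp, rfl⟩ b ⟨q, hq, rfl⟩
      rw [wordMap_dist hS]
      exact mul_le_mul_of_nonneg_left
        (Metric.dist_le_diam_of_mem hFc.isBounded hp hq) hrω.le
    have hdiamK' : Metric.diam (wordMap S ω '' F) ≤ ε := by
      have h1 : wordRatio r ω * Metric.diam F ≤ wordRatio r ω * R :=
        mul_le_mul_of_nonneg_left hdiamF.le hrω.le
      have h2 : R * wordRatio r ω < ε := hwSig.2.1
      linarith [hdiamK, mul_comm (wordRatio r ω) R ▸ h1]
    have hsub2 : Metric.cthickening ε (wordMap S ω '' F) ⊆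
        Metric.closedBall (wordMap S ω z₀) (2 * ε) := by
      intro u hu
      have h1 : Metric.infDist u (wordMap S ω '' F) ≤ ε := by
        rw [Metric.infDist]
        calc (EMetric.infEdist u _).toReal ≤ (ENNReal.ofReal ε).toReal :=
              ENNReal.toReal_mono ENNReal.ofReal_ne_top (Metric.mem_cthickening_iff.1 hu)
          _ = ε := ENNReal.toReal_ofReal hε.1.le
      obtain ⟨w, hwK, hw⟩ := hKc.exists_infDist_eq_dist hKne u
      have h3 : dist w (wordMap S ω z₀) ≤ ε :=
        le_trans (Metric.dist_le_diam_of_mem hKc.isBounded hwK ⟨z₀, hz₀, rfl⟩) hdiamK'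
      have h4 : dist u (wordMap S ω z₀) ≤ 2 * ε := by
        calc dist u (wordMap S ω z₀) ≤ dist u w + dist w (wordMap S ω z₀) :=
              dist_triangle _ _ _
          _ ≤ ε + ε := add_le_add (by rw [← hw]; exact h1) h3
          _ = 2 * ε := by ring
      exact Metric.mem_closedBall.2 h4
    calc volume (Metric.cthickening ε (wordMap S ω '' F))
        ≤ volume (Metric.closedBall (wordMap S ω z₀) (2 * ε)) := measure_mono hsub2
      _ = ENNReal.ofReal ((2 * ε) ^ d) * V := by
          rw [MeasureTheory.Measure.addHaar_closedBall volume _ (by linarith [hε.1])]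
          congr 2
          rw [finrank_euclideanSpace, Fintype.card_fin]
  -- putting things together
  have hcard : Ω.ncard = hΩfin.toFinset.card := Set.ncard_eq_toFinset_card Ω hΩfin
  calc volume (Metric.cthickening ε F ∩ B)
      ≤ volume (⋃ ω ∈ hΩfin.toFinset, Metric.cthickening ε (wordMap S ω '' F)) :=
        measure_mono hsub
    _ ≤ ∑ ω ∈ hΩfin.toFinset, volume (Metric.cthickening ε (wordMap S ω '' F)) :=
        measure_biUnion_finset_le _ _
    _ ≤ ∑ ω ∈ hΩfin.toFinset, ENNReal.ofReal ((2 * ε) ^ d) * V :=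
        Finset.sum_le_sum hvol
    _ = (hΩfin.toFinset.card : ℝ≥0∞) * (ENNReal.ofReal ((2 * ε) ^ d) * V) := by
        rw [Finset.sum_const, nsmul_eq_mul]
    _ = ENNReal.ofReal (2 ^ d * V.toReal * (Ω.ncard : ℝ) * ε ^ (d : ℝ)) := by
        rw [Real.rpow_natCast]
        have hε0 : (0:ℝ) ≤ ε := hε.1.le
        have : 2 ^ d * V.toReal * (Ω.ncard : ℝ) * ε ^ d
            = (Ω.ncard : ℝ) * ((2 * ε) ^ d) * V.toReal := by rw [mul_pow]; ring
        rw [this, ENNReal.ofReal_mul (by positivity), ENNReal.ofReal_mul (by positivity),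
          ENNReal.ofReal_toReal hVlt.ne, ENNReal.ofReal_natCast, hcard, mul_assoc]
    _ ≤ ENNReal.ofReal (2 ^ d * V.toReal * (Ω.ncard : ℝ) * ε ^ (d : ℝ)) := le_refl _
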